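/- For every integer n ≥ 2, Υ(n) ≤ S₁(n), and moreover Υ(n) > S₁(n) − π(n) − S₂(n), where S₁(n) = Σ_{p ≤ n, p prime} (n−1)/(p−1) and S₂(n) = Σ_{p ≤ n, p prime} log n/log p. -/
import Mathlib


open Finset

/-- `Υ(n) = ∑_{p ≤ n, p prime} v_p(n!)`. -/
noncomputable def Upsilon (n : ℕ) : ℕ :=
  ∑ p ∈ (Finset.range (n + 1)).filter Nat.Prime, (Nat.factorial n).factorization p

/-- `S₁(n) = ∑_{p ≤ n, p prime} (n−1)/(p−1)`. -/
noncomputable def S1 (n : ℕ) : ℝ :=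
  ∑ p ∈ (Finset.range (n + 1)).filter Nat.Prime, ((n : ℝ) - 1) / ((p : ℝ) - 1)

/-- `S₂(n) = ∑_{p ≤ n, p prime} log n / log p`. -/
noncomputable def S2 (n : ℕ) : ℝ :=
  ∑ p ∈ (Finset.range (n + 1)).filter Nat.Prime, Real.log n / Real.log p

lemma key_bounds (n p : ℕ) (hn : 2 ≤ n) (hp : p.Prime) :
    ((Nat.factorial n).factorization p : ℝ) ≤ ((n : ℝ) - 1) / ((p : ℝ) - 1) ∧
    ((n : ℝ) - 1) / ((p : ℝ) - 1) - 1 - Real.log n / Real.log p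
      < ((Nat.factorial n).factorization p : ℝ) := by
  haveI : Fact p.Prime := ⟨hp⟩
  have hp2 : 2 ≤ p := hp.two_le
  have hn0 : n ≠ 0 := by omega
  set s := (p.digits n).sum with hs
  set v := (Nat.factorial n).factorization p with hv
  have hvpv : v = padicValNat p (Nat.factorial n) := by
    rw [hv, Nat.factorization_def _ hp]
  have hkey : (p - 1) * v = n - s := by
    rw [hvpv]; exact sub_one_mul_padicValNat_factorial n
  have hsn : s ≤ n := Nat.digit_sum_le p n
  have hs1 : 1 ≤ s := by
    have hne : p.digits n ≠ [] := Nat.digits_ne_nil_iff_ne_zero.mpr hn0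
    have hlast := Nat.getLast_digit_ne_zero p hn0
    have hmem : (p.digits n).getLast hne ∈ p.digits n := List.getLast_mem hne
    have := List.single_le_sum (fun x _ => Nat.zero_le x) _ hmem
    omega
  have hsL : s ≤ (p - 1) * (Nat.log p n + 1) := by
    have hlen : (p.digits n).length = Nat.log p n + 1 := Nat.digits_len p n hp.one_lt hn0
    have := List.sum_le_card_nsmul (p.digits n) (p - 1)
      (fun x hx => by have := Nat.digits_lt_base hp.one_lt hx; omega)
    simpa [hlen, Nat.mul_comm, smul_eq_mul] using this
  have hp0 : (0 : ℝ) < (p : ℝ) - 1 := by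
    have : (2 : ℝ) ≤ p := by exact_mod_cast hp2
    linarith
  have hkeyR : ((p : ℝ) - 1) * v = (n : ℝ) - s := by
    have h1 : ((p - 1) * v : ℕ) = ((n - s : ℕ) : ℕ) := hkey
    have := congrArg (fun x : ℕ => (x : ℝ)) h1
    push_cast [Nat.cast_sub hsn, Nat.cast_sub (by omega : 1 ≤ p)] at this
    linarith [this]
  have hsnR : (1 : ℝ) ≤ s := by exact_mod_cast hs1
  have hsLR : (s : ℝ) ≤ ((p : ℝ) - 1) * ((Nat.log p n : ℝ) + 1) := by
    have := hsL
    have h' : ((s : ℕ) : ℝ) ≤ (((p - 1) * (Nat.log p n + 1) : ℕ) : ℝ) := by exact_mod_cast this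
    push_cast [Nat.cast_sub (by omega : 1 ≤ p)] at h'
    linarith
  have hL : (Nat.log p n : ℝ) ≤ Real.log n / Real.log p := by
    have hplog : 0 < Real.log p := Real.log_pos (by exact_mod_cast hp.one_lt)
    rw [le_div_iff₀ hplog]
    have hle : (p : ℝ) ^ (Nat.log p n) ≤ (n : ℝ) := by
      exact_mod_cast Nat.pow_log_le_self p hn0
    calc (Nat.log p n : ℝ) * Real.log p = Real.log ((p : ℝ) ^ (Nat.log p n)) := by
          rw [Real.log_pow]
      _ ≤ Real.log n := Real.log_le_log (by positivity) hle
  constructor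
  · rw [le_div_iff₀ hp0]
    nlinarith
  · rw [sub_sub, sub_lt_iff_lt_add, div_lt_iff₀ hp0]
    have h2 : ((Nat.log p n : ℝ)) * ((p:ℝ) - 1) ≤ (Real.log n / Real.log p) * ((p:ℝ)-1) :=
      mul_le_mul_of_nonneg_right hL (le_of_lt hp0)
    nlinarith

theorem upsilon_between_S1_S2 (n : ℕ) (hn : 2 ≤ n) :
    (Upsilon n : ℝ) ≤ S1 n ∧
      (Upsilon n : ℝ) > S1 n - (Nat.primeCounting n : ℝ) - S2 n := by
  set F := (Finset.range (n + 1)).filter Nat.Prime with hF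
  have hU : (Upsilon n : ℝ) = ∑ p ∈ F, ((Nat.factorial n).factorization p : ℝ) := by
    rw [Upsilon]; push_cast; rfl
  have hmem : ∀ p ∈ F, p.Prime := fun p hp => (Finset.mem_filter.mp hp).2
  have hcard : (Nat.primeCounting n : ℝ) = (F.card : ℝ) := by
    rw [Nat.primeCounting, Nat.primeCounting', Nat.count_eq_card_filter_range]
  have hne : F.Nonempty := ⟨2, Finset.mem_filter.mpr ⟨Finset.mem_range.mpr (by omega),
    Nat.prime_two⟩⟩
  constructor
  · rw [hU, S1]
    exact Finset.sum_le_sum fun p hp => (key_bounds n p hn (hmem p hp)).1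
  · rw [gt_iff_lt, hU, S1, S2, hcard, ← hF]
    have h1 : ((F.card : ℕ) : ℝ) = ∑ _p ∈ F, (1 : ℝ) := by simp
    rw [h1, ← Finset.sum_sub_distrib, ← Finset.sum_sub_distrib]
    exact Finset.sum_lt_sum_of_nonempty hne fun p hp => (key_bounds n p hn (hmem p hp)).2
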